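/- Let k be a field, Q a strongly locally finite quiver, and M a representation in Rep(Q). Then: (1) if M is almost finitely co-presented, then soc M is finitely supported and essential in M, and supp M is socle-finite and contains no right infinite path; (2) if M is almost finitely presented, then top M is finitely supported and essential over M, and supp M is top-finite and contains no left infinite path. -/

import Mathlib

open CategoryTheory CategoryTheory.Limits

/-- A quiver is strongly locally finite if it is locally finite (finitely many arrows
starting and ending at every vertex) and interval-finite (finitely many paths between
any two vertices). -/
def StronglyLocallyFinite (Q : Type) [Quiver.{0} Q] : Prop :=
  (∀ x : Q, Finite (Σ y : Q, x ⟶ y)) ∧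
  (∀ y : Q, Finite (Σ x : Q, x ⟶ y)) ∧
  (∀ x y : Q, Finite (Quiver.Path x y))

variable (k : Type) [Field k] (Q : Type) [Quiver.{0} Q]

/-- The category `Rep(Q)` of `k`-representations of `Q`, i.e. functors from the
path category of `Q` to `k`-vector spaces. -/
abbrev RepQ := Paths Q ⥤ ModuleCat.{0} k

instance : HasFiniteBiproducts (RepQ k Q) := Abelian.hasFiniteBiproducts

variable {Q}

/-- A vertex of `Q`, seen as an object of the path category. -/
abbrev vtx (x : Q) : Paths Q := x

/-- An arrow of `Q`, seen as a morphism of the path category. -/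
abbrev arr {x y : Q} (e : x ⟶ y) : vtx x ⟶ vtx y := e.toPath

/-- A path of `Q`, seen as a morphism of the path category. -/
abbrev pth {x y : Q} (p : Quiver.Path x y) : vtx x ⟶ vtx y := p

universe uC vC

/-- Natural transformations between functors lifted from prefunctors are determined
by vertexwise data commuting with the arrow maps. -/
def liftNatTrans {C : Type uC} [Category.{vC} C] {φ ψ : Q ⥤q C}
    (app : ∀ x : Q, φ.obj x ⟶ ψ.obj x)
    (h : ∀ {x y : Q} (e : x ⟶ y), φ.map e ≫ app y = app x ≫ ψ.map e) :
    Paths.lift φ ⟶ Paths.lift ψ where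
  app x := app x
  naturality x y p := by
    change Quiver.Path (V := Q) x y at p
    induction p with
    | nil =>
      exact (Category.id_comp _).trans (Category.comp_id _).symm
    | cons p e ih =>
      exact (Category.assoc _ _ _).trans (by
        erw [h e, ← Category.assoc, ih, Category.assoc]; rfl)

variable (Q) in
/-- The prefunctor underlying the indecomposable projective representation `P_a`. -/
noncomputable def projPre (a : Q) : Q ⥤q ModuleCat.{0} k where
  obj x := ModuleCat.of k (Quiver.Path a x →₀ k)
  map {x y} e := ModuleCat.ofHom (Finsupp.lmapDomain k k (fun ρ : Quiver.Path a x => ρ.cons e))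

variable (Q) in
/-- The indecomposable projective representation `P_a`: the value at `x` is the
`k`-vector space with basis the set of paths from `a` to `x`, and an arrow acts by
composition of paths. -/
noncomputable def projRep (a : Q) : RepQ k Q := Paths.lift (projPre k Q a)

variable (Q) in
/-- The prefunctor underlying the indecomposable injective representation `I_a`. -/
noncomputable def injPre (a : Q) : Q ⥤q ModuleCat.{0} k where
  obj x := ModuleCat.of k (Quiver.Path x a → k)
  map {x y} e := ModuleCat.ofHom (LinearMap.funLeft k k (fun σ : Quiver.Path y a => (Quiver.Hom.toPath e).comp σ))

variable (Q) in
/-- The indecomposable injective representation `I_a`: the value at `x` is the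
`k`-vector space with basis the set of paths from `x` to `a` (realised as the dual-style
function space `Quiver.Path x a → k`, which is the same as the span of the paths since `Q`
is interval-finite); the arrow `α : x ⟶ y` sends a path `ρα` to `ρ` and kills the paths
not factoring through `α`. -/
noncomputable def injRep (a : Q) : RepQ k Q := Paths.lift (injPre k Q a)

variable (Q) in
/-- The representation with value `k` everywhere, all arrows acting as the identity. -/
noncomputable def unitRep : RepQ k Q :=
  Paths.lift { obj := fun _ => ModuleCat.of k k, map := fun _ => ModuleCat.ofHom LinearMap.id }

variable (Q) in
/-- The prefunctor underlying the simple representation `S_a`. -/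
noncomputable def simplePre (a : Q) : Q ⥤q ModuleCat.{0} k where
  obj x := ModuleCat.of k (PLift (x = a) → k)
  map _ := 0

variable (Q) in
/-- The simple representation `S_a` concentrated at the vertex `a`. -/
noncomputable def simpleRep (a : Q) : RepQ k Q := Paths.lift (simplePre k Q a)

/-- The representation `M ⊗_k V` obtained by tensoring vertexwise with a `k`-space `V`. -/
noncomputable def tensorRep (M : RepQ k Q) (V : ModuleCat.{0} k) : RepQ k Q :=
  M ⋙ MonoidalCategory.tensorRight V

open Classical in
/-- Auxiliary linear map used to define restrictions of representations. -/
noncomputable def piCondMap {A B : Type} [AddCommGroup A] [Module k A] [AddCommGroup B]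
    [Module k B] (φ : A →ₗ[k] B) (P P' : Prop) : (PLift P → A) →ₗ[k] (PLift P' → B) where
  toFun f _ := if h : P then φ (f ⟨h⟩) else 0
  map_add' f g := by funext _; dsimp; split <;> simp
  map_smul' c f := by funext _; dsimp; split <;> simp

variable (Q) in
/-- The prefunctor underlying the restriction of `M` to the full subquiver generated
by a set `S` of vertices. -/
noncomputable def restrictPre (M : RepQ k Q) (S : Set Q) : Q ⥤q ModuleCat.{0} k where
  obj x := ModuleCat.of k (PLift (x ∈ S) → M.obj (vtx x))
  map {x y} e := ModuleCat.ofHom (piCondMap k (M.map (arr e)).hom (x ∈ S) (y ∈ S))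

variable (Q) in
/-- The restriction `M_S` of a representation `M` to the full subquiver generated by a
set `S` of vertices: the value at `x ∈ S` is `M(x)`, the value elsewhere is `0`, arrows
with both ends in `S` act as in `M` and the other arrows act as zero. -/
noncomputable def restrictRep (M : RepQ k Q) (S : Set Q) : RepQ k Q :=
  Paths.lift (restrictPre k Q M S)

variable (Q) in
/-- The restriction `f_S` of a morphism of representations to the full subquiver
generated by a set `S` of vertices. -/
noncomputable def restrictHom {M N : RepQ k Q} (f : M ⟶ N) (S : Set Q) :
    restrictRep k Q M S ⟶ restrictRep k Q N S :=
  liftNatTrans (fun x => ModuleCat.ofHom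
      (LinearMap.compLeft (f.app (vtx x)).hom (PLift (x ∈ S)))) (by
    intro x y e
    ext g
    funext hy
    show (LinearMap.compLeft (f.app (vtx y)).hom (PLift (y ∈ S)))
        (piCondMap k (M.map (arr e)).hom (x ∈ S) (y ∈ S) g) hy =
      (piCondMap k (N.map (arr e)).hom (x ∈ S) (y ∈ S))
        (LinearMap.compLeft (f.app (vtx x)).hom (PLift (x ∈ S)) g) hy
    by_cases hx : x ∈ S
    · simp only [piCondMap, LinearMap.compLeft, LinearMap.coe_mk, AddHom.coe_mk, dif_pos hx]
      exact congrArg (fun φ => ModuleCat.Hom.hom φ (g ⟨hx⟩)) (f.naturality (arr e))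
    · simp [piCondMap, LinearMap.compLeft, dif_neg hx]
      exact map_zero (f.app (vtx y)).hom)

variable (Q) in
/-- A subrepresentation of a representation, given by a family of subspaces stable
under the arrow maps. -/
structure SubRep (M : RepQ k Q) : Type where
  carrier : ∀ x : Q, Submodule k (M.obj (vtx x))
  stable : ∀ {x y : Q} (e : x ⟶ y) (v : M.obj (vtx x)),
    v ∈ carrier x → M.map (arr e) v ∈ carrier y

variable (Q) in
/-- The socle of `M` at a vertex: the intersection of the kernels of the maps
associated to the arrows starting there. -/
def socle (M : RepQ k Q) (x : Q) : Submodule k (M.obj (vtx x)) :=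
  ⨅ (y : Q) (e : x ⟶ y), LinearMap.ker (M.map (arr e)).hom

variable (Q) in
/-- The radical of `M` at a vertex: the sum of the images of the maps associated to the
arrows ending there. -/
def radical (M : RepQ k Q) (x : Q) : Submodule k (M.obj (vtx x)) :=
  ⨆ (y : Q) (e : y ⟶ x), LinearMap.range (M.map (arr e)).hom

variable (Q) in
/-- The support of a representation: the set of vertices with nonzero value. -/
def suppR (M : RepQ k Q) : Set Q := {x : Q | Nontrivial (M.obj (vtx x))}

variable (Q) in
/-- A representation is locally finite dimensional if all its vertex spaces are
finite dimensional; these form the category `rep(Q)`. -/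
def LocFinDim (M : RepQ k Q) : Prop := ∀ x : Q, FiniteDimensional k (M.obj (vtx x))

variable (Q) in
/-- A representation is finite dimensional if the total dimension `Σ_x dim M(x)` is finite,
i.e. it is locally finite dimensional with finite support. -/
def FinDimRep (M : RepQ k Q) : Prop := (suppR k Q M).Finite ∧ LocFinDim k Q M

variable (Q) in
/-- The socle of `M` is an essential subrepresentation of `M`. -/
def SocleEssential (M : RepQ k Q) : Prop :=
  ∀ N : SubRep k Q M, (∃ x, N.carrier x ≠ ⊥) → ∃ x, N.carrier x ⊓ socle k Q M x ≠ ⊥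

variable (Q) in
/-- The socle of `M` is finitely supported. -/
def SocleFinSupported (M : RepQ k Q) : Prop := {x : Q | socle k Q M x ≠ ⊥}.Finite

variable (Q) in
/-- The radical of `M` is a superfluous subrepresentation of `M`,
i.e. the top of `M` is essential over `M`. -/
def TopEssential (M : RepQ k Q) : Prop :=
  ∀ N : SubRep k Q M, (∀ x, N.carrier x ⊔ radical k Q M x = ⊤) → ∀ x, N.carrier x = ⊤

variable (Q) in
/-- The top of `M` is finitely supported. -/
def TopFinSupported (M : RepQ k Q) : Prop := {x : Q | radical k Q M x ≠ ⊤}.Finite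

variable (Q) in
/-- Membership in `Inj(Q)`: the full additive subcategory of `Rep(Q)` generated by the
representations `I_a ⊗ V` with `a` a vertex and `V` a `k`-space. -/
def MemInj (M : RepQ k Q) : Prop :=
  ∃ (n : ℕ) (a : Fin n → Q) (V : Fin n → ModuleCat.{0} k),
    Nonempty (M ≅ ⨁ (fun i => tensorRep k (injRep k Q (a i)) (V i)))

variable (Q) in
/-- Membership in `Proj(Q)`: the full additive subcategory of `Rep(Q)` generated by the
representations `P_a ⊗ V` with `a` a vertex and `V` a `k`-space. -/
def MemProj (M : RepQ k Q) : Prop :=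
  ∃ (n : ℕ) (a : Fin n → Q) (V : Fin n → ModuleCat.{0} k),
    Nonempty (M ≅ ⨁ (fun i => tensorRep k (projRep k Q (a i)) (V i)))

variable (Q) in
/-- Membership in `inj(Q)`: the locally finite dimensional representations in `Inj(Q)`. -/
def MemInjL (M : RepQ k Q) : Prop := MemInj k Q M ∧ LocFinDim k Q M

variable (Q) in
/-- Membership in `proj(Q)`: the locally finite dimensional representations in `Proj(Q)`. -/
def MemProjL (M : RepQ k Q) : Prop := MemProj k Q M ∧ LocFinDim k Q M

variable (Q) in
/-- A representation is almost finitely presented if it admits a projective resolution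
`0 → P₁ → P₀ → M → 0` with `P₀, P₁ ∈ Proj(Q)`. -/
def AlmostFinPresented (M : RepQ k Q) : Prop :=
  ∃ (P₁ P₀ : RepQ k Q) (f : P₁ ⟶ P₀) (g : P₀ ⟶ M) (w : f ≫ g = 0),
    MemProj k Q P₁ ∧ MemProj k Q P₀ ∧ (ShortComplex.mk f g w).ShortExact

variable (Q) in
/-- A representation is almost finitely co-presented if it admits an injective
co-resolution `0 → M → I₀ → I₁ → 0` with `I₀, I₁ ∈ Inj(Q)`. -/
def AlmostFinCopresented (M : RepQ k Q) : Prop :=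
  ∃ (I₀ I₁ : RepQ k Q) (f : M ⟶ I₀) (g : I₀ ⟶ I₁) (w : f ≫ g = 0),
    MemInj k Q I₀ ∧ MemInj k Q I₁ ∧ (ShortComplex.mk f g w).ShortExact

variable (Q) in
/-- A representation is finitely presented if it admits a projective resolution
`0 → P₁ → P₀ → M → 0` with `P₀, P₁ ∈ proj(Q)`; these form the category `rep^+(Q)`. -/
def FinPresented (M : RepQ k Q) : Prop :=
  ∃ (P₁ P₀ : RepQ k Q) (f : P₁ ⟶ P₀) (g : P₀ ⟶ M) (w : f ≫ g = 0),
    MemProjL k Q P₁ ∧ MemProjL k Q P₀ ∧ (ShortComplex.mk f g w).ShortExact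

variable (Q) in
/-- A representation is finitely co-presented if it admits an injective co-resolution
`0 → M → I₀ → I₁ → 0` with `I₀, I₁ ∈ inj(Q)`; these form the category `rep^-(Q)`. -/
def FinCopresented (M : RepQ k Q) : Prop :=
  ∃ (I₀ I₁ : RepQ k Q) (f : M ⟶ I₀) (g : I₀ ⟶ I₁) (w : f ≫ g = 0),
    MemInjL k Q I₀ ∧ MemInjL k Q I₁ ∧ (ShortComplex.mk f g w).ShortExact

variable (Q) in
/-- A right infinite path with all vertices in `S`. -/
def HasRightInfPathIn (S : Set Q) : Prop :=
  ∃ (p : ℕ → Q) (_ : ∀ n, p n ⟶ p (n + 1)), ∀ n, p n ∈ S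

variable (Q) in
/-- A left infinite path with all vertices in `S`. -/
def HasLeftInfPathIn (S : Set Q) : Prop :=
  ∃ (p : ℕ → Q) (_ : ∀ n, p (n + 1) ⟶ p n), ∀ n, p n ∈ S

/-- The list of vertices visited by a path. -/
def pathVerts {V : Type*} [Quiver V] {x : V} : ∀ {y : V}, Quiver.Path x y → List V
  | _, Quiver.Path.nil => [x]
  | y, Quiver.Path.cons p _ => pathVerts p ++ [y]

variable (Q) in
/-- The full subquiver generated by `S` is socle-finite: every vertex of `S` is a
predecessor (within `S`) of one of finitely many fixed vertices. -/
def SetSocleFinite (S : Set Q) : Prop :=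
  ∃ T : Finset Q, ∀ x ∈ S, ∃ t ∈ T, ∃ p : Quiver.Path x t, ∀ z ∈ pathVerts p, z ∈ S

variable (Q) in
/-- The full subquiver generated by `S` is top-finite: every vertex of `S` is a
successor (within `S`) of one of finitely many fixed vertices. -/
def SetTopFinite (S : Set Q) : Prop :=
  ∃ T : Finset Q, ∀ x ∈ S, ∃ t ∈ T, ∃ p : Quiver.Path t x, ∀ z ∈ pathVerts p, z ∈ S

section AlmostSplit

universe uD vD
variable {C : Type uD} [Category.{vD} C]

/-- A morphism is a section if it admits a left inverse. -/
def IsSect {X Y : C} (f : X ⟶ Y) : Prop := ∃ r : Y ⟶ X, f ≫ r = 𝟙 X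

/-- A morphism is a retraction if it admits a right inverse. -/
def IsRetr {X Y : C} (f : X ⟶ Y) : Prop := ∃ s : Y ⟶ X, s ≫ f = 𝟙 Y

/-- A morphism `g : Y ⟶ Z` is right almost split relative to the object class `P` if it is
not a retraction and every non-retraction `h : W ⟶ Z` with `W` in `P` factors through `g`. -/
def RightAS (P : C → Prop) {Y Z : C} (g : Y ⟶ Z) : Prop :=
  ¬ IsRetr g ∧ ∀ ⦃W : C⦄, P W → ∀ h : W ⟶ Z, ¬ IsRetr h → ∃ u : W ⟶ Y, u ≫ g = h

/-- A morphism `f : X ⟶ Y` is left almost split relative to the object class `P` if it is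
not a section and every non-section `h : X ⟶ W` with `W` in `P` factors through `f`. -/
def LeftAS (P : C → Prop) {X Y : C} (f : X ⟶ Y) : Prop :=
  ¬ IsSect f ∧ ∀ ⦃W : C⦄, P W → ∀ h : X ⟶ W, ¬ IsSect h → ∃ u : Y ⟶ W, f ≫ u = h

/-- A morphism `g : Y ⟶ Z` is right minimal. -/
def RightMin {Y Z : C} (g : Y ⟶ Z) : Prop := ∀ u : Y ⟶ Y, u ≫ g = g → IsIso u

/-- A morphism `f : X ⟶ Y` is left minimal. -/
def LeftMin {X Y : C} (f : X ⟶ Y) : Prop := ∀ u : Y ⟶ Y, f ≫ u = f → IsIso u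

/-- Minimal right almost split relative to the object class `P`. -/
def MinRightAS (P : C → Prop) {Y Z : C} (g : Y ⟶ Z) : Prop := RightAS P g ∧ RightMin g

/-- Minimal left almost split relative to the object class `P`. -/
def MinLeftAS (P : C → Prop) {X Y : C} (f : X ⟶ Y) : Prop := LeftAS P f ∧ LeftMin f

/-- An object is indecomposable if it is nonzero and its only idempotent endomorphisms
are `0` and the identity (equivalently, it is not a direct sum of two nonzero objects). -/
def Indec [Limits.HasZeroMorphisms C] (X : C) : Prop :=
  ¬ Limits.IsZero X ∧ ∀ e : X ⟶ X, e ≫ e = e → e = 0 ∨ e = 𝟙 X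

/-- A morphism is irreducible relative to the object class `P` if it is neither a section
nor a retraction while in any factorization through an object of `P` the first factor is a
section or the second factor is a retraction. -/
def IrredOn (P : C → Prop) {X Y : C} (f : X ⟶ Y) : Prop :=
  ¬ IsSect f ∧ ¬ IsRetr f ∧
    ∀ ⦃Z : C⦄, P Z → ∀ (g : X ⟶ Z) (h : Z ⟶ Y), g ≫ h = f → IsSect g ∨ IsRetr h

/-- An object `M` is projective relative to the object class `P`: any morphism from `M` to
the codomain of an epimorphism between objects of `P` lifts. -/
def ProjOn (P : C → Prop) (M : C) : Prop :=
  ∀ ⦃A B : C⦄, P A → P B → ∀ (g : A ⟶ B), Epi g → ∀ h : M ⟶ B, ∃ l : M ⟶ A, l ≫ g = h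

/-- An object `M` is injective relative to the object class `P`: any morphism to `M` from
the domain of a monomorphism between objects of `P` extends. -/
def InjOn (P : C → Prop) (M : C) : Prop :=
  ∀ ⦃A B : C⦄, P A → P B → ∀ (g : A ⟶ B), Mono g → ∀ h : A ⟶ M, ∃ l : B ⟶ M, g ≫ l = h

/-- An essential monomorphism, relative to the object class `P`. -/
def EssMonoOn (P : C → Prop) {X Y : C} (f : X ⟶ Y) : Prop :=
  Mono f ∧ ∀ ⦃W : C⦄, P W → ∀ g : Y ⟶ W, Mono (f ≫ g) → Mono g

/-- A superfluous epimorphism, relative to the object class `P`. -/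
def SupEpiOn (P : C → Prop) {X Y : C} (f : X ⟶ Y) : Prop :=
  Epi f ∧ ∀ ⦃W : C⦄, P W → ∀ g : W ⟶ X, Epi (g ≫ f) → Epi g

end AlmostSplit

/-- An almost split (Auslander-Reiten) sequence, relative to the object class `P` in an
ambient abelian category: a short exact sequence with terms in `P` whose left map is
minimal left almost split and whose right map is minimal right almost split relative
to `P`. -/
def IsASSeqOn {C : Type uC} [Category.{vC} C] [Abelian C] (P : C → Prop)
    (S : ShortComplex C) : Prop :=
  S.ShortExact ∧ P S.X₁ ∧ P S.X₂ ∧ P S.X₃ ∧ MinLeftAS P S.f ∧ MinRightAS P S.g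

variable (Q) in
/-- The morphism `P_y ⟶ P_x` determined by a path `p` from `x` to `y`
(composition with `p`). -/
noncomputable def projPathTrans {x y : Q} (p : Quiver.Path x y) :
    projRep k Q y ⟶ projRep k Q x :=
  liftNatTrans (fun z => ModuleCat.ofHom
      (Finsupp.lmapDomain k k (fun ρ : Quiver.Path y z => p.comp ρ))) (by
    intro z w e
    apply ModuleCat.hom_ext
    show (Finsupp.lmapDomain k k _).comp (Finsupp.lmapDomain k k _) =
      (Finsupp.lmapDomain k k _).comp (Finsupp.lmapDomain k k _)
    rw [← Finsupp.lmapDomain_comp, ← Finsupp.lmapDomain_comp]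
    rfl)

variable (Q) in
/-- The morphism `I_y ⟶ I_x` determined by a path `p` from `x` to `y`. -/
noncomputable def injPathTrans {x y : Q} (p : Quiver.Path x y) :
    injRep k Q y ⟶ injRep k Q x :=
  liftNatTrans (fun z => ModuleCat.ofHom
      (LinearMap.funLeft k k (fun σ : Quiver.Path z x => σ.comp p))) (by
    intro z w e
    ext h
    funext σ
    show h ((Quiver.Hom.toPath e).comp (σ.comp p)) = h (((Quiver.Hom.toPath e).comp σ).comp p)
    rw [Quiver.Path.comp_assoc] <;> try rfl)

variable (Q) in
/-- The linear combination of path morphisms `P_y ⟶ P_x` determined by an element of the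
span of the paths from `x` to `y`. -/
noncomputable def projCombTrans {x y : Q} (c : Quiver.Path x y →₀ k) :
    projRep k Q y ⟶ projRep k Q x :=
  c.sum (fun p cp => cp • projPathTrans k Q p)

variable (Q) in
/-- The linear combination of path morphisms `I_y ⟶ I_x` determined by an element of the
span of the paths from `x` to `y`. -/
noncomputable def injCombTrans {x y : Q} (c : Quiver.Path x y →₀ k) :
    injRep k Q y ⟶ injRep k Q x :=
  c.sum (fun p cp => cp • injPathTrans k Q p)

variable (Q) in
/-- Evaluation of a morphism `P_y ⟶ P_x` on the trivial path, yielding an element of the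
span of the paths from `x` to `y`. -/
noncomputable def evalProjHom {x y : Q} (u : projRep k Q y ⟶ projRep k Q x) :
    Quiver.Path x y →₀ k :=
  u.app (vtx y) (Finsupp.single Quiver.Path.nil 1)

open Classical in
variable (Q) in
/-- Evaluation of a morphism `I_y ⟶ I_x`, yielding an element of the span of the paths
from `x` to `y` (here `Q` is interval-finite). -/
noncomputable def evalInjHom (hfin : ∀ x y : Q, Finite (Quiver.Path x y)) {x y : Q}
    (u : injRep k Q y ⟶ injRep k Q x) : Quiver.Path x y →₀ k :=
  haveI := hfin x y
  Finsupp.equivFunOnFinite.symm (fun p => u.app (vtx x) (Pi.single p 1) Quiver.Path.nil)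

variable (Q) in
/-- The Nakayama functor `ν` applied to a morphism between objects of `proj(Q)` written as
finite direct sums of representations `P_a`; the value is the corresponding morphism between
the direct sums of the representations `I_a`. -/
noncomputable def nuMap {r s : ℕ} (xv : Fin r → Q) (yv : Fin s → Q)
    (f : (⨁ fun j => projRep k Q (yv j)) ⟶ (⨁ fun i => projRep k Q (xv i))) :
    (⨁ fun j => injRep k Q (yv j)) ⟶ (⨁ fun i => injRep k Q (xv i)) :=
  biproduct.matrix fun j i =>
    injCombTrans k Q (evalProjHom k Q
      (biproduct.ι (fun j => projRep k Q (yv j)) j ≫ f ≫ biproduct.π (fun i => projRep k Q (xv i)) i))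

variable (Q) in
/-- The inverse Nakayama functor `ν⁻` applied to a morphism between objects of `inj(Q)`
written as finite direct sums of representations `I_a`. -/
noncomputable def nuInvMap (hfin : ∀ x y : Q, Finite (Quiver.Path x y)) {r s : ℕ}
    (xv : Fin r → Q) (yv : Fin s → Q)
    (g : (⨁ fun i => injRep k Q (xv i)) ⟶ (⨁ fun j => injRep k Q (yv j))) :
    (⨁ fun i => projRep k Q (xv i)) ⟶ (⨁ fun j => projRep k Q (yv j)) :=
  biproduct.matrix fun i j =>
    projCombTrans k Q (evalInjHom k Q hfin
      (biproduct.ι (fun i => injRep k Q (xv i)) i ≫ g ≫ biproduct.π (fun j => injRep k Q (yv j)) j))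

variable (Q) in
/-- `0 → ⊕_j P_{y_j} → ⊕_i P_{x_i} → M → 0` is a minimal projective resolution:
a short exact sequence in which the two epimorphisms onto `M` and onto the kernel of `ε`
are projective covers (superfluous epimorphisms). -/
structure IsMinProjRes (M : RepQ k Q) {r s : ℕ} (xv : Fin r → Q) (yv : Fin s → Q)
    (f : (⨁ fun j => projRep k Q (yv j)) ⟶ (⨁ fun i => projRep k Q (xv i)))
    (ε : (⨁ fun i => projRep k Q (xv i)) ⟶ M) : Prop where
  w : f ≫ ε = 0
  shortExact : (ShortComplex.mk f ε w).ShortExact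
  superfluous_ε : SupEpiOn (fun _ => True) ε
  superfluous_f : SupEpiOn (fun _ => True) (kernel.lift ε f w)

variable (Q) in
/-- `0 → M → ⊕_i I_{x_i} → ⊕_j I_{y_j} → 0` is a minimal injective co-resolution:
a short exact sequence in which the two monomorphisms from `M` and from the cokernel of `ι`
are injective hulls (essential monomorphisms). -/
structure IsMinInjCores (M : RepQ k Q) {r s : ℕ} (xv : Fin r → Q) (yv : Fin s → Q)
    (ι : M ⟶ (⨁ fun i => injRep k Q (xv i)))
    (g : (⨁ fun i => injRep k Q (xv i)) ⟶ (⨁ fun j => injRep k Q (yv j))) : Prop where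
  w : ι ≫ g = 0
  shortExact : (ShortComplex.mk ι g w).ShortExact
  essential_ι : EssMonoOn (fun _ => True) ι
  essential_g : EssMonoOn (fun _ => True) (cokernel.desc ι g w)

variable (Q) in
/-- `N` is an Auslander-Reiten translate `DTr M` of `M`: for some minimal projective
resolution `0 → P₁ → P₀ → M → 0` by finite direct sums of representations `P_a`,
the representation `N` is isomorphic to the kernel of `ν(f) : ν(P₁) ⟶ ν(P₀)`. -/
def IsDTrOf (N M : RepQ k Q) : Prop :=
  ∃ (r s : ℕ) (xv : Fin r → Q) (yv : Fin s → Q)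
    (f : (⨁ fun j => projRep k Q (yv j)) ⟶ (⨁ fun i => projRep k Q (xv i)))
    (ε : (⨁ fun i => projRep k Q (xv i)) ⟶ M),
      IsMinProjRes k Q M xv yv f ε ∧ Nonempty (N ≅ kernel (nuMap k Q xv yv f))

variable (Q) in
/-- `N` is an inverse Auslander-Reiten translate `TrD M` of `M`: for some minimal
injective co-resolution `0 → M → I₀ → I₁ → 0` by finite direct sums of representations
`I_a`, the representation `N` is isomorphic to the cokernel of `ν⁻(g) : ν⁻(I₀) ⟶ ν⁻(I₁)`. -/
def IsTrDOf (hfin : ∀ x y : Q, Finite (Quiver.Path x y)) (N M : RepQ k Q) : Prop :=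
  ∃ (r s : ℕ) (xv : Fin r → Q) (yv : Fin s → Q)
    (ι : M ⟶ (⨁ fun i => injRep k Q (xv i)))
    (g : (⨁ fun i => injRep k Q (xv i)) ⟶ (⨁ fun j => injRep k Q (yv j))),
      IsMinInjCores k Q M xv yv ι g ∧ Nonempty (N ≅ cokernel (nuInvMap k Q hfin xv yv g))

variable (Q) in
/-- `N ≅ DTr^n M`, where in particular all the intermediate translates are defined. -/
def IsDTrPow : ℕ → RepQ k Q → RepQ k Q → Prop
  | 0, N, M => Nonempty (N ≅ M)
  | n + 1, N, M => ∃ L : RepQ k Q, IsDTrPow n L M ∧ IsDTrOf k Q N L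

variable (Q) in
/-- The quiver `Q` is connected: any two vertices are joined by a walk. -/
def QConnected : Prop :=
  ∀ x y : Q, Nonempty (Quiver.Path (a := (x : Quiver.Symmetrify Q)) (y : Quiver.Symmetrify Q))

/-! ### Auxiliary development for the proof of Statement 2. -/

section Aux

variable {k}

/-- Every path is either trivial or factors through its first arrow. -/
lemma path_first_decomp {x b : Q} (p : Quiver.Path x b) :
    (∃ _ : x = b, HEq p (Quiver.Path.nil : Quiver.Path x x)) ∨
    ∃ (y : Q) (e : x ⟶ y) (q : Quiver.Path y b), p = (Quiver.Hom.toPath e).comp q := by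
  induction p with
  | nil => exact Or.inl ⟨rfl, HEq.rfl⟩
  | @cons c z p' f ih =>
    rcases ih with ⟨h, hp⟩ | ⟨y, e, q, rfl⟩
    · subst h
      have hnil : p' = Quiver.Path.nil := eq_of_heq hp
      subst hnil
      exact Or.inr ⟨_, f, Quiver.Path.nil, rfl⟩
    · exact Or.inr ⟨y, e, q.cons f, rfl⟩

lemma map_pth_comp (M : RepQ k Q) {x y z : Q} (p : Quiver.Path x y) (q : Quiver.Path y z)
    (v : M.obj (vtx x)) :
    M.map (pth (p.comp q)) v = M.map (pth q) (M.map (pth p) v) := by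
  rw [show pth (p.comp q) = pth p ≫ pth q from rfl, M.map_comp]
  rfl

lemma map_pth_nil (M : RepQ k Q) {x : Q} (v : M.obj (vtx x)) :
    M.map (pth Quiver.Path.nil) v = v := by
  rw [show pth (Quiver.Path.nil : Quiver.Path x x) = 𝟙 (vtx x) from rfl, M.map_id]
  rfl

lemma map_pth_cons (M : RepQ k Q) {x y z : Q} (p : Quiver.Path x y) (e : y ⟶ z)
    (v : M.obj (vtx x)) :
    M.map (pth (p.cons e)) v = M.map (arr e) (M.map (pth p) v) :=
  map_pth_comp M p (Quiver.Hom.toPath e) v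

/-- All the vertices visited by a path acting nontrivially support the representation. -/
lemma verts_nontrivial (M : RepQ k Q) {x : Q} (v : M.obj (vtx x)) :
    ∀ {z : Q} (p : Quiver.Path x z), M.map (pth p) v ≠ 0 →
      ∀ w ∈ pathVerts p, Nontrivial (M.obj (vtx w)) := by
  intro z p
  induction p with
  | nil =>
    intro hv w hw
    simp only [pathVerts, List.mem_singleton] at hw
    subst hw
    exact nontrivial_of_ne _ 0 (by rwa [map_pth_nil] at hv)
  | cons p' e ih =>
    intro hv w hw
    rw [map_pth_cons] at hv
    have h1 : M.map (pth p') v ≠ 0 := fun h => hv (by rw [h, map_zero])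
    rcases List.mem_append.1 hw with h | h
    · exact ih h1 w h
    · rw [List.mem_singleton] at h
      subst h
      exact nontrivial_of_ne _ 0 hv

lemma SubRep.stable_path {M : RepQ k Q} (N : SubRep k Q M) {x z : Q} (p : Quiver.Path x z)
    {v : M.obj (vtx x)} (hv : v ∈ N.carrier x) : M.map (pth p) v ∈ N.carrier z := by
  induction p with
  | nil => rw [map_pth_nil]; exact hv
  | cons p' e ih => rw [map_pth_cons]; exact N.stable e _ ih

lemma exists_length_bound {α : Type} [Finite α] (s t : α → Q)
    (hfin : ∀ x y : Q, Finite (Quiver.Path x y)) :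
    ∃ D : ℕ, ∀ (i : α) (q : Quiver.Path (s i) (t i)), q.length ≤ D := by
  have h : ∀ i : α, ∃ D : ℕ, ∀ q : Quiver.Path (s i) (t i), q.length ≤ D := by
    intro i
    haveI := hfin (s i) (t i)
    obtain ⟨D, hD⟩ := (Set.finite_range (fun q : Quiver.Path (s i) (t i) => q.length)).bddAbove
    exact ⟨D, fun q => hD ⟨q, rfl⟩⟩
  choose D hD using h
  cases isEmpty_or_nonempty α with
  | inl h => exact ⟨0, fun i => (IsEmpty.false i).elim⟩
  | inr h =>
    haveI := Fintype.ofFinite α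
    exact ⟨Finset.univ.sup D, fun i q => le_trans (hD i q) (Finset.le_sup (Finset.mem_univ i))⟩

lemma no_right_inf_path (hfin : ∀ x y : Q, Finite (Quiver.Path x y)) {n : ℕ} (a : Fin n → Q)
    (S : Set Q) (hS : ∀ x ∈ S, ∃ i, Nonempty (Quiver.Path x (a i))) :
    ¬ HasRightInfPathIn Q S := by
  rintro ⟨p, e, hp⟩
  have hc : ∀ m : ℕ, {q : Quiver.Path (p 0) (p m) // q.length = m} := by
    intro m
    induction m with
    | zero => exact ⟨Quiver.Path.nil, rfl⟩
    | succ m ih => exact ⟨ih.1.cons (e m), by simp [ih.2]⟩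
  have hchoice : ∀ m : ℕ, ∃ i : Fin n, Nonempty (Quiver.Path (p m) (a i)) :=
    fun m => hS (p m) (hp m)
  choose f q using hchoice
  obtain ⟨i, hi⟩ := Finite.exists_infinite_fiber f
  obtain ⟨D, hD⟩ := exists_length_bound (fun _ : Unit => p 0) (fun _ => a i) hfin
  obtain ⟨m, hm, hlt⟩ := Set.Infinite.exists_gt (Set.infinite_coe_iff.1 hi) D
  obtain ⟨qm⟩ := q m
  have hfm : f m = i := hm
  have hb := hD () ((hc m).1.comp (hfm ▸ qm))
  rw [Quiver.Path.length_comp, (hc m).2] at hb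
  omega

lemma no_left_inf_path (hfin : ∀ x y : Q, Finite (Quiver.Path x y)) {n : ℕ} (a : Fin n → Q)
    (S : Set Q) (hS : ∀ x ∈ S, ∃ i, Nonempty (Quiver.Path (a i) x)) :
    ¬ HasLeftInfPathIn Q S := by
  rintro ⟨p, e, hp⟩
  have hc : ∀ m : ℕ, {q : Quiver.Path (p m) (p 0) // m ≤ q.length} := by
    intro m
    induction m with
    | zero => exact ⟨Quiver.Path.nil, le_refl _⟩
    | succ m ih =>
      refine ⟨(Quiver.Hom.toPath (e m)).comp ih.1, ?_⟩
      have h2 := ih.2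
      simp only [Quiver.Path.length_comp, Quiver.Hom.toPath, Quiver.Path.length_cons,
        Quiver.Path.length_nil]
      omega
  have hchoice : ∀ m : ℕ, ∃ i : Fin n, Nonempty (Quiver.Path (a i) (p m)) :=
    fun m => hS (p m) (hp m)
  choose f q using hchoice
  obtain ⟨i, hi⟩ := Finite.exists_infinite_fiber f
  obtain ⟨D, hD⟩ := exists_length_bound (fun _ : Unit => a i) (fun _ => p 0) hfin
  obtain ⟨m, hm, hlt⟩ := Set.Infinite.exists_gt (Set.infinite_coe_iff.1 hi) D
  obtain ⟨qm⟩ := q m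
  have hfm : f m = i := hm
  have hb := hD () ((hfm ▸ qm).comp (hc m).1)
  rw [Quiver.Path.length_comp] at hb
  have h2 := (hc m).2
  omega

lemma biproduct_decomp {n : ℕ} (N : Fin n → RepQ k Q) (x : Q) (h : (⨁ N).obj (vtx x)) :
    h = ∑ i, (biproduct.ι N i).app (vtx x) ((biproduct.π N i).app (vtx x) h) := by
  have h1 : (∑ i, biproduct.π N i ≫ biproduct.ι N i).app (vtx x) h = h := by
    rw [biproduct.total]
    rfl
  calc h = (∑ i, biproduct.π N i ≫ biproduct.ι N i).app (vtx x) h := h1.symm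
    _ = ∑ i, (biproduct.ι N i).app (vtx x) ((biproduct.π N i).app (vtx x) h) := by
        rw [NatTrans.app_sum]
        change (∑ i, (biproduct.π N i ≫ biproduct.ι N i).app (vtx x)).hom h = _
        rw [ModuleCat.hom_sum, LinearMap.sum_apply]
        rfl

lemma app_injective {M N : RepQ k Q} (f : M ⟶ N) [Mono f] (x : Paths Q) :
    Function.Injective (f.app x) := by
  rw [← ModuleCat.mono_iff_injective]
  infer_instance

lemma app_surjective {M N : RepQ k Q} (f : M ⟶ N) [Epi f] (x : Paths Q) :
    Function.Surjective (f.app x) := by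
  rw [← ModuleCat.epi_iff_surjective]
  infer_instance

lemma tensor_eq_zero_of_subsingleton {A V : Type} [AddCommGroup A] [Module k A]
    [Subsingleton A] [AddCommGroup V] [Module k V] (z : TensorProduct k A V) : z = 0 := by
  induction z using TensorProduct.induction_on with
  | zero => rfl
  | tmul a v => rw [Subsingleton.elim a 0, TensorProduct.zero_tmul]
  | add x y hx hy => rw [hx, hy, add_zero]

lemma rTensor_joint_inj {A V : Type} [AddCommGroup A] [Module k A] [AddCommGroup V]
    [Module k V] {J : Type} [Fintype J] {B : J → Type} [∀ j, AddCommGroup (B j)]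
    [∀ j, Module k (B j)] (φ : ∀ j, A →ₗ[k] B j)
    (hinj : ∀ a : A, (∀ j, φ j a = 0) → a = 0)
    (h : TensorProduct k A V) (h0 : ∀ j, LinearMap.rTensor V (φ j) h = 0) : h = 0 := by
  classical
  set f : A →ₗ[k] (∀ j, B j) := LinearMap.pi φ with hf
  have hfi : Function.Injective f := by
    intro u w huw
    have hz : ∀ j, φ j (u - w) = 0 := by
      intro j
      have hfz : f (u - w) = 0 := by rw [map_sub, huw, sub_self]
      calc φ j (u - w) = f (u - w) j := rfl
        _ = 0 := by rw [hfz]; rfl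
    exact sub_eq_zero.1 (hinj _ hz)
  have hrf : LinearMap.rTensor V f h = 0 := by
    have hid : LinearMap.rTensor V f h
        = LinearMap.rTensor V (LinearMap.id : (∀ j, B j) →ₗ[k] ∀ j, B j)
            (LinearMap.rTensor V f h) := by
      rw [LinearMap.rTensor_id]
      rfl
    have hsum : (LinearMap.id : (∀ j, B j) →ₗ[k] ∀ j, B j)
        = ∑ j, (LinearMap.single k B j) ∘ₗ (LinearMap.proj j) := by
      apply LinearMap.ext
      intro v
      rw [LinearMap.id_apply, LinearMap.sum_apply]
      have hj : ∀ j, ((LinearMap.single k B j) ∘ₗ (LinearMap.proj j)) v = Pi.single j (v j) :=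
        fun j => rfl
      simp_rw [hj]
      exact (Finset.univ_sum_single v).symm
    have hsum2 : LinearMap.rTensor V (∑ j, (LinearMap.single k B j) ∘ₗ (LinearMap.proj j))
        = ∑ j, LinearMap.rTensor V ((LinearMap.single k B j) ∘ₗ (LinearMap.proj j)) :=
      map_sum (LinearMap.rTensorHom V) _ _
    rw [hid, hsum, hsum2, LinearMap.sum_apply]
    refine Finset.sum_eq_zero fun j _ => ?_
    rw [LinearMap.rTensor_comp, LinearMap.comp_apply]
    have hproj : LinearMap.rTensor V (LinearMap.proj j (φ := B)) (LinearMap.rTensor V f h)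
        = LinearMap.rTensor V ((LinearMap.proj j : (∀ j, B j) →ₗ[k] B j) ∘ₗ f) h := by
      rw [LinearMap.rTensor_comp]
      rfl
    rw [hproj, hf, LinearMap.proj_pi, h0 j, map_zero]
  have hi2 := Module.Flat.rTensor_preserves_injective_linearMap (M := V) f hfi
  have h2 : LinearMap.rTensor V f h = LinearMap.rTensor V f 0 := by rw [map_zero, hrf]
  exact hi2 h2

lemma tensor_injRep_socle {x a : Q} (harr : Finite (Σ y : Q, x ⟶ y))
    (V : ModuleCat.{0} k) (hxa : x ≠ a)
    (h : (tensorRep k (injRep k Q a) V).obj (vtx x))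
    (h0 : ∀ (y : Q) (e : x ⟶ y), (tensorRep k (injRep k Q a) V).map (arr e) h = 0) :
    h = 0 := by
  haveI := Fintype.ofFinite (Σ y : Q, x ⟶ y)
  refine rTensor_joint_inj (J := Σ y : Q, x ⟶ y)
    (B := fun j => Quiver.Path j.1 a → k)
    (fun j => LinearMap.funLeft k k (fun σ : Quiver.Path j.1 a => (Quiver.Hom.toPath j.2).comp σ))
    ?_ h ?_
  · intro g hg
    funext ρ
    rcases path_first_decomp ρ with ⟨h1, _⟩ | ⟨y, e, q, rfl⟩
    · exact absurd h1 hxa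
    · exact congrFun (hg ⟨y, e⟩) q
  · rintro ⟨y, e⟩
    exact h0 y e

lemma projRep_map_arr (a : Q) {x y : Q} (e : x ⟶ y) :
    (projRep k Q a).map (arr e)
      = ModuleCat.ofHom (Finsupp.lmapDomain k k (fun ρ : Quiver.Path a x => ρ.cons e)) :=
  Paths.lift_toPath (projPre k Q a) e

lemma projRep_map_single (a : Q) {y z : Q} (q : Quiver.Path y z) (ρ : Quiver.Path a y) (c : k) :
    (projRep k Q a).map (pth q) (Finsupp.single ρ c) = Finsupp.single (ρ.comp q) c := by
  induction q with
  | nil =>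
    exact map_pth_nil (projRep k Q a) (Finsupp.single ρ c)
  | cons q e ih =>
    calc _ = (projRep k Q a).map (arr e) ((projRep k Q a).map (pth q) (Finsupp.single ρ c)) :=
          map_pth_cons _ _ _ _
      _ = (projRep k Q a).map (arr e) (Finsupp.single (ρ.comp q) c) := by rw [ih]
      _ = _ := by
          rw [projRep_map_arr]
          exact Finsupp.mapDomain_single

end Aux
section InjSide

variable {k} {M : RepQ k Q} {n : ℕ} {a : Fin n → Q} {V : Fin n → ModuleCat.{0} k}

lemma supp_pred (ι : M ⟶ ⨁ (fun i => tensorRep k (injRep k Q (a i)) (V i)))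
    (hι : ∀ x : Q, Function.Injective (ι.app (vtx x))) {x : Q}
    (v : M.obj (vtx x)) (hv : v ≠ 0) : ∃ i, Nonempty (Quiver.Path x (a i)) := by
  by_contra hc
  push_neg at hc
  apply hv
  apply hι x
  rw [map_zero]
  rw [biproduct_decomp _ x (ι.app (vtx x) v)]
  refine Finset.sum_eq_zero fun i _ => ?_
  haveI : Subsingleton (Quiver.Path x (a i) → k) :=
    ⟨fun f g => funext fun p => ((hc i).false p).elim⟩
  have hz : (biproduct.π (fun i => tensorRep k (injRep k Q (a i)) (V i)) i).app (vtx x)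
      (ι.app (vtx x) v) = 0 :=
    tensor_eq_zero_of_subsingleton (A := Quiver.Path x (a i) → k) (V := V i) _
  rw [hz, map_zero]

lemma socle_mem_image (ι : M ⟶ ⨁ (fun i => tensorRep k (injRep k Q (a i)) (V i)))
    (hι : ∀ x : Q, Function.Injective (ι.app (vtx x)))
    (harr : ∀ x : Q, Finite (Σ y : Q, x ⟶ y)) {x : Q}
    (hsoc : socle k Q M x ≠ ⊥) : ∃ i, x = a i := by
  obtain ⟨v, hvmem, hv⟩ := (Submodule.ne_bot_iff _).1 hsoc
  have hker : ∀ (y : Q) (e : x ⟶ y), M.map (arr e) v = 0 := by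
    intro y e
    simp only [socle, Submodule.mem_iInf] at hvmem
    exact hvmem y e
  by_contra hcon
  push_neg at hcon
  have hιv : ι.app (vtx x) v ≠ 0 := fun h => hv (hι x (by rw [h, map_zero]))
  have hex : ∃ i, (biproduct.π (fun i => tensorRep k (injRep k Q (a i)) (V i)) i).app (vtx x)
      (ι.app (vtx x) v) ≠ 0 := by
    by_contra hall
    push_neg at hall
    apply hιv
    rw [biproduct_decomp _ x (ι.app (vtx x) v)]
    exact Finset.sum_eq_zero fun i _ => by rw [hall i, map_zero]
  obtain ⟨i, hi⟩ := hex
  apply hi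
  apply tensor_injRep_socle (harr x) (V i) (hcon i)
  intro y e
  have h1 : (biproduct.π (fun i => tensorRep k (injRep k Q (a i)) (V i)) i).app (vtx y)
      ((⨁ fun i => tensorRep k (injRep k Q (a i)) (V i)).map (arr e) (ι.app (vtx x) v))
      = (tensorRep k (injRep k Q (a i)) (V i)).map (arr e)
        ((biproduct.π (fun i => tensorRep k (injRep k Q (a i)) (V i)) i).app (vtx x)
          (ι.app (vtx x) v)) :=
    ConcreteCategory.congr_hom
      ((biproduct.π (fun i => tensorRep k (injRep k Q (a i)) (V i)) i).naturality (arr e)) _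
  rw [← h1]
  have h2 : (⨁ fun i => tensorRep k (injRep k Q (a i)) (V i)).map (arr e)
      (ι.app (vtx x) v) = 0 := by
    have h3 : ι.app (vtx y) (M.map (arr e) v)
        = (⨁ fun i => tensorRep k (injRep k Q (a i)) (V i)).map (arr e) (ι.app (vtx x) v) :=
      ConcreteCategory.congr_hom (ι.naturality (arr e)) v
    rw [← h3, hker y e, map_zero]
  rw [h2, map_zero]

lemma exists_socle_path (ι : M ⟶ ⨁ (fun i => tensorRep k (injRep k Q (a i)) (V i)))
    (hι : ∀ x : Q, Function.Injective (ι.app (vtx x)))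
    (hfin : ∀ x y : Q, Finite (Quiver.Path x y)) {x : Q}
    (v : M.obj (vtx x)) (hv : v ≠ 0) :
    ∃ (z : Q) (p : Quiver.Path x z),
      M.map (pth p) v ≠ 0 ∧ M.map (pth p) v ∈ socle k Q M z := by
  classical
  obtain ⟨D, hD⟩ := exists_length_bound (fun _ : Fin n => x) a hfin
  set P : ℕ → Prop :=
    fun m => ∃ (z : Q) (p : Quiver.Path x z), p.length = m ∧ M.map (pth p) v ≠ 0 with hP
  have hP0 : P 0 := ⟨x, Quiver.Path.nil, rfl, by rwa [map_pth_nil]⟩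
  have hPbound : ∀ m, P m → m ≤ D := by
    rintro m ⟨z, p, hlen, hp⟩
    subst hlen
    obtain ⟨i, ⟨q⟩⟩ := supp_pred ι hι _ hp
    have hb := hD i (p.comp q)
    rw [Quiver.Path.length_comp] at hb
    omega
  have hPm : P (Nat.findGreatest P D) := Nat.findGreatest_spec (Nat.zero_le D) hP0
  obtain ⟨z, p, hlen, hp⟩ := hPm
  refine ⟨z, p, hp, ?_⟩
  simp only [socle, Submodule.mem_iInf]
  intro y e
  rw [LinearMap.mem_ker]
  by_contra hne
  have hP' : P (Nat.findGreatest P D + 1) := by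
    refine ⟨y, p.cons e, by simp [Quiver.Path.length_cons, hlen], ?_⟩
    rw [map_pth_cons]
    exact hne
  exact Nat.findGreatest_is_greatest (Nat.lt_succ_self _) (hPbound _ hP') hP'

end InjSide
section ProjSide

variable {k} {M : RepQ k Q} {n : ℕ} {a : Fin n → Q} {V : Fin n → ModuleCat.{0} k}

lemma gen_top (ε : (⨁ (fun i => tensorRep k (projRep k Q (a i)) (V i))) ⟶ M)
    (hε : ∀ x : Q, Function.Surjective (ε.app (vtx x))) (y : Q) :
    (⨆ (i : Fin n), ⨆ (q : Quiver.Path (a i) y),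
      LinearMap.range (M.map (pth q)).hom) = ⊤ := by
  rw [eq_top_iff]
  rintro m -
  obtain ⟨u, rfl⟩ := hε y m
  rw [biproduct_decomp _ y u, map_sum]
  refine Submodule.sum_mem _ fun i _ => ?_
  generalize (biproduct.π (fun i => tensorRep k (projRep k Q (a i)) (V i)) i).app (vtx y) u = w
  have key : ∀ w : TensorProduct k (Quiver.Path (a i) y →₀ k) (V i),
      ε.app (vtx y) ((biproduct.ι (fun i => tensorRep k (projRep k Q (a i)) (V i)) i).app (vtx y) w)
        ∈ ⨆ (i : Fin n), ⨆ (q : Quiver.Path (a i) y), LinearMap.range (M.map (pth q)).hom := by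
    intro w
    induction w using TensorProduct.induction_on with
    | zero => erw [map_zero, map_zero]; exact Submodule.zero_mem _
    | add w1 w2 h1 h2 => erw [map_add, map_add]; exact Submodule.add_mem _ h1 h2
    | tmul f v =>
      induction f using Finsupp.induction with
      | zero =>
        rw [TensorProduct.zero_tmul]; erw [map_zero, map_zero]
        exact Submodule.zero_mem _
      | single_add q c f hqf hc ih =>
        rw [TensorProduct.add_tmul]; erw [map_add, map_add]
        refine Submodule.add_mem _ ?_ ih
        have hkey : ε.app (vtx y)
            ((biproduct.ι (fun i => tensorRep k (projRep k Q (a i)) (V i)) i).app (vtx y)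
              ((Finsupp.single q c) ⊗ₜ[k] v))
            = M.map (pth q) (ε.app (vtx (a i))
              ((biproduct.ι (fun i => tensorRep k (projRep k Q (a i)) (V i)) i).app (vtx (a i))
                ((Finsupp.single Quiver.Path.nil c) ⊗ₜ[k] v))) := by
          have h1 : (biproduct.ι (fun i => tensorRep k (projRep k Q (a i)) (V i)) i).app (vtx y)
              ((tensorRep k (projRep k Q (a i)) (V i)).map (pth q)
                ((Finsupp.single Quiver.Path.nil c) ⊗ₜ[k] v))
              = (⨁ fun i => tensorRep k (projRep k Q (a i)) (V i)).map (pth q)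
                ((biproduct.ι (fun i => tensorRep k (projRep k Q (a i)) (V i)) i).app (vtx (a i))
                  ((Finsupp.single Quiver.Path.nil c) ⊗ₜ[k] v)) :=
            ConcreteCategory.congr_hom
              ((biproduct.ι (fun i => tensorRep k (projRep k Q (a i)) (V i)) i).naturality (pth q)) _
          have h2 : (tensorRep k (projRep k Q (a i)) (V i)).map (pth q)
              ((Finsupp.single Quiver.Path.nil c) ⊗ₜ[k] v) = (Finsupp.single q c) ⊗ₜ[k] v := by
            rw [show (tensorRep k (projRep k Q (a i)) (V i)).map (pth q)
                ((Finsupp.single Quiver.Path.nil c) ⊗ₜ[k] v)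
                = ((projRep k Q (a i)).map (pth q) (Finsupp.single Quiver.Path.nil c)) ⊗ₜ[k] v
              from rfl]
            rw [projRep_map_single, Quiver.Path.nil_comp]
            rfl
          have h3 := ConcreteCategory.congr_hom (ε.naturality (pth q))
            ((biproduct.ι (fun i => tensorRep k (projRep k Q (a i)) (V i)) i).app (vtx (a i))
              ((Finsupp.single Quiver.Path.nil c) ⊗ₜ[k] v))
          exact (congrArg (fun t => ε.app (vtx y)
            ((biproduct.ι (fun i => tensorRep k (projRep k Q (a i)) (V i)) i).app (vtx y) t))
              h2.symm).trans ((congrArg (fun t => ε.app (vtx y) t) h1).trans h3)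
        refine (congrArg (fun t => t ∈ ⨆ (i : Fin n), ⨆ (q : Quiver.Path (a i) y),
          LinearMap.range (M.map (pth q)).hom) hkey).mpr ?_
        exact Submodule.mem_iSup_of_mem i (Submodule.mem_iSup_of_mem q ⟨_, rfl⟩)
  exact key w

lemma gen_exists (ε : (⨁ (fun i => tensorRep k (projRep k Q (a i)) (V i))) ⟶ M)
    (hε : ∀ x : Q, Function.Surjective (ε.app (vtx x))) {x : Q}
    (v : M.obj (vtx x)) (hv : v ≠ 0) :
    ∃ (i : Fin n) (q : Quiver.Path (a i) x) (w : M.obj (vtx (a i))),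
      M.map (pth q) w ≠ 0 := by
  by_contra hc
  push_neg at hc
  apply hv
  have hv2 : v ∈ ⨆ (i : Fin n), ⨆ (q : Quiver.Path (a i) x),
      LinearMap.range (M.map (pth q)).hom := by
    rw [gen_top ε hε x]
    exact Submodule.mem_top
  have hle : (⨆ (i : Fin n), ⨆ (q : Quiver.Path (a i) x),
      LinearMap.range (M.map (pth q)).hom) ≤ ⊥ := by
    refine iSup_le fun i => iSup_le fun q => ?_
    rintro m hm
    obtain ⟨w, rfl⟩ := hm
    rw [Submodule.mem_bot]
    exact hc i q w
  exact Submodule.mem_bot _ |>.1 (hle hv2)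

lemma radical_eq_top (ε : (⨁ (fun i => tensorRep k (projRep k Q (a i)) (V i))) ⟶ M)
    (hε : ∀ x : Q, Function.Surjective (ε.app (vtx x))) {x : Q}
    (hx : ∀ i, x ≠ a i) : radical k Q M x = ⊤ := by
  rw [eq_top_iff, ← gen_top ε hε x]
  refine iSup_le fun i => iSup_le fun q => ?_
  cases q with
  | nil => exact absurd rfl (hx i)
  | cons q' e =>
    rintro m hm
    obtain ⟨w, rfl⟩ := hm
    rw [map_pth_cons]
    simp only [radical]
    exact Submodule.mem_iSup_of_mem _ (Submodule.mem_iSup_of_mem e ⟨_, rfl⟩)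

lemma top_essential (ε : (⨁ (fun i => tensorRep k (projRep k Q (a i)) (V i))) ⟶ M)
    (hε : ∀ x : Q, Function.Surjective (ε.app (vtx x)))
    (hfin : ∀ x y : Q, Finite (Quiver.Path x y)) :
    TopEssential k Q M := by
  intro N hN x
  obtain ⟨D, hD⟩ := exists_length_bound a (fun _ : Fin n => x) hfin
  have key : ∀ (d : ℕ) (y : Q), N.carrier y ⊔
      (⨆ (i : Fin n), ⨆ (q : Quiver.Path (a i) y), ⨆ (_ : d ≤ q.length),
        LinearMap.range (M.map (pth q)).hom) = ⊤ := by
    intro d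
    induction d with
    | zero =>
      intro y
      rw [eq_top_iff, ← gen_top ε hε y]
      refine le_trans ?_ le_sup_right
      refine iSup_le fun i => iSup_le fun q => ?_
      exact le_iSup_of_le i (le_iSup_of_le q
        (le_iSup (fun _ : 0 ≤ q.length => LinearMap.range (M.map (pth q)).hom) (Nat.zero_le _)))
    | succ d ih =>
      intro y
      have hstep : (⨆ (i : Fin n), ⨆ (q : Quiver.Path (a i) y), ⨆ (_ : d ≤ q.length),
          LinearMap.range (M.map (pth q)).hom) ≤ N.carrier y ⊔
            (⨆ (i : Fin n), ⨆ (q : Quiver.Path (a i) y), ⨆ (_ : d + 1 ≤ q.length),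
              LinearMap.range (M.map (pth q)).hom) := by
        refine iSup_le fun i => iSup_le fun q => iSup_le fun hd => ?_
        rintro t ht
        obtain ⟨m, rfl⟩ := ht
        have hm : m ∈ N.carrier (a i) ⊔ radical k Q M (a i) := by
          rw [hN (a i)]
          exact Submodule.mem_top
        obtain ⟨nn, hnn, rr, hrr, rfl⟩ := Submodule.mem_sup.1 hm
        rw [map_add]
        refine Submodule.add_mem _ (Submodule.mem_sup_left (N.stable_path q hnn)) ?_
        simp only [radical] at hrr
        refine Submodule.iSup_induction _
          (motive := fun t => M.map (pth q) t ∈ N.carrier y ⊔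
            (⨆ (i : Fin n), ⨆ (q : Quiver.Path (a i) y), ⨆ (_ : d + 1 ≤ q.length),
              LinearMap.range (M.map (pth q)).hom)) hrr ?_ ?_ ?_
        · intro z rr' hrr'
          refine Submodule.iSup_induction _
            (motive := fun t => M.map (pth q) t ∈ N.carrier y ⊔
              (⨆ (i : Fin n), ⨆ (q : Quiver.Path (a i) y), ⨆ (_ : d + 1 ≤ q.length),
                LinearMap.range (M.map (pth q)).hom)) hrr' ?_ ?_ ?_
          · rintro e t' ht'
            obtain ⟨m', rfl⟩ := ht'
            have hm' : m' ∈ ⨆ (j : Fin n), ⨆ (q' : Quiver.Path (a j) z),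
                LinearMap.range (M.map (pth q')).hom := by
              rw [gen_top ε hε z]
              exact Submodule.mem_top
            refine Submodule.iSup_induction _
              (motive := fun t => M.map (pth q) (M.map (arr e) t) ∈ N.carrier y ⊔
                (⨆ (i : Fin n), ⨆ (q : Quiver.Path (a i) y), ⨆ (_ : d + 1 ≤ q.length),
                  LinearMap.range (M.map (pth q)).hom)) hm' ?_ ?_ ?_
            · intro j w' hw'
              refine Submodule.iSup_induction _
                (motive := fun t => M.map (pth q) (M.map (arr e) t) ∈ N.carrier y ⊔
                  (⨆ (i : Fin n), ⨆ (q : Quiver.Path (a i) y), ⨆ (_ : d + 1 ≤ q.length),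
                    LinearMap.range (M.map (pth q)).hom)) hw' ?_ ?_ ?_
              · rintro q' t'' ht''
                obtain ⟨w'', rfl⟩ := ht''
                have heq : M.map (pth (q'.comp ((Quiver.Hom.toPath e).comp q))) w''
                    = M.map (pth q) (M.map (arr e) (M.map (pth q') w'')) := by
                  rw [map_pth_comp, map_pth_comp]
                rw [← heq]
                refine Submodule.mem_sup_right ?_
                refine Submodule.mem_iSup_of_mem j (Submodule.mem_iSup_of_mem _
                  (Submodule.mem_iSup_of_mem ?_ ⟨w'', rfl⟩))
                simp only [Quiver.Path.length_comp, Quiver.Hom.toPath,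
                  Quiver.Path.length_cons, Quiver.Path.length_nil]
                omega
              · simp only [map_zero]; exact Submodule.zero_mem _
              · intro t1 t2 h1 h2
                simp only [map_add]
                exact Submodule.add_mem _ h1 h2
            · simp only [map_zero]; exact Submodule.zero_mem _
            · intro t1 t2 h1 h2
              simp only [map_add]
              exact Submodule.add_mem _ h1 h2
          · simp only [map_zero]; exact Submodule.zero_mem _
          · intro t1 t2 h1 h2
            simp only [map_add]
            exact Submodule.add_mem _ h1 h2
        · simp only [map_zero]; exact Submodule.zero_mem _
        · intro t1 t2 h1 h2
          simp only [map_add]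
          exact Submodule.add_mem _ h1 h2
      rw [eq_top_iff, ← ih y]
      refine sup_le le_sup_left (le_trans hstep ?_)
      exact sup_le le_sup_left le_sup_right
  have hbot : (⨆ (i : Fin n), ⨆ (q : Quiver.Path (a i) x), ⨆ (_ : D + 1 ≤ q.length),
      LinearMap.range (M.map (pth q)).hom) = ⊥ := by
    refine le_bot_iff.1 (iSup_le fun i => iSup_le fun q => iSup_le fun hd => ?_)
    exact absurd (hD i q) (by omega)
  have hfin2 := key (D + 1) x
  rw [hbot, sup_bot_eq] at hfin2
  exact hfin2

end ProjSide
/-- Let `k` be a field, `Q` a strongly locally finite quiver and `M` a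
representation in `Rep(Q)`. Then:
(1) if `M` is almost finitely co-presented, then `soc M` is finitely supported and
essential in `M`, and `supp M` is socle-finite with no right infinite path;
(2) if `M` is almost finitely presented, then `top M` is finitely supported and essential
over `M`, and `supp M` is top-finite with no left infinite path. -/
theorem statement_2 (k : Type) [Field k] (Q : Type) [Quiver.{0} Q]
    (hQ : StronglyLocallyFinite Q) (M : RepQ k Q) :
    (AlmostFinCopresented k Q M →
      SocleFinSupported k Q M ∧ SocleEssential k Q M ∧
        SetSocleFinite Q (suppR k Q M) ∧ ¬ HasRightInfPathIn Q (suppR k Q M)) ∧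
    (AlmostFinPresented k Q M →
      TopFinSupported k Q M ∧ TopEssential k Q M ∧
        SetTopFinite Q (suppR k Q M) ∧ ¬ HasLeftInfPathIn Q (suppR k Q M)) := by
  classical
  constructor
  · rintro ⟨I₀, I₁, f, g, w, hI₀, hI₁, hse⟩
    obtain ⟨harr, harr', hfin⟩ := hQ
    obtain ⟨n, a, V, ⟨ψ⟩⟩ := hI₀
    haveI : Mono f := hse.mono_f
    set ι : M ⟶ ⨁ (fun i => tensorRep k (injRep k Q (a i)) (V i)) := f ≫ ψ.hom with hι_def
    haveI : Mono ι := mono_comp _ _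
    have hι : ∀ x : Q, Function.Injective (ι.app (vtx x)) := fun x => app_injective ι (vtx x)
    have hfs : SocleFinSupported k Q M := by
      refine Set.Finite.subset (Finset.image a Finset.univ).finite_toSet ?_
      intro x hx
      obtain ⟨i, rfl⟩ := socle_mem_image ι hι harr hx
      exact Finset.mem_coe.2 (Finset.mem_image_of_mem a (Finset.mem_univ i))
    refine ⟨hfs, ?_, ?_, ?_⟩
    · rintro N ⟨x, hx⟩
      obtain ⟨v, hvmem, hv⟩ := (Submodule.ne_bot_iff _).1 hx
      obtain ⟨z, p, hp, hpsoc⟩ := exists_socle_path ι hι hfin v hv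
      exact ⟨z, (Submodule.ne_bot_iff _).2
        ⟨M.map (pth p) v, Submodule.mem_inf.2 ⟨N.stable_path p hvmem, hpsoc⟩, hp⟩⟩
    · refine ⟨hfs.toFinset, ?_⟩
      intro x hx
      haveI : Nontrivial (M.obj (vtx x)) := hx
      obtain ⟨v, hv⟩ := exists_ne (0 : M.obj (vtx x))
      obtain ⟨z, p, hp, hpsoc⟩ := exists_socle_path ι hι hfin v hv
      refine ⟨z, ?_, p, ?_⟩
      · exact (Set.Finite.mem_toFinset (hs := hfs)).2
          ((Submodule.ne_bot_iff _).2 ⟨M.map (pth p) v, hpsoc, hp⟩)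
      · intro w hw
        exact verts_nontrivial M v p hp w hw
    · refine no_right_inf_path hfin a _ ?_
      intro x hx
      haveI : Nontrivial (M.obj (vtx x)) := hx
      obtain ⟨v, hv⟩ := exists_ne (0 : M.obj (vtx x))
      exact supp_pred ι hι v hv
  · rintro ⟨P₁, P₀, f, g, w, hP₁, hP₀, hse⟩
    obtain ⟨harr, harr', hfin⟩ := hQ
    obtain ⟨n, a, V, ⟨ψ⟩⟩ := hP₀
    haveI : Epi g := hse.epi_g
    set ε : (⨁ (fun i => tensorRep k (projRep k Q (a i)) (V i))) ⟶ M := ψ.inv ≫ g with hε_def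
    haveI : Epi ε := epi_comp _ _
    have hε : ∀ x : Q, Function.Surjective (ε.app (vtx x)) := fun x => app_surjective ε (vtx x)
    refine ⟨?_, top_essential ε hε hfin, ?_, ?_⟩
    · refine Set.Finite.subset (Finset.image a Finset.univ).finite_toSet ?_
      intro x hx
      by_contra hcon
      refine hx (radical_eq_top ε hε ?_)
      intro i hxa
      exact hcon (by rw [hxa]
                     exact Finset.mem_coe.2 (Finset.mem_image_of_mem a (Finset.mem_univ i)))
    · refine ⟨Finset.image a Finset.univ, ?_⟩
      intro x hx
      haveI : Nontrivial (M.obj (vtx x)) := hx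
      obtain ⟨v, hv⟩ := exists_ne (0 : M.obj (vtx x))
      obtain ⟨i, q, w', hw'⟩ := gen_exists ε hε v hv
      exact ⟨a i, Finset.mem_image_of_mem a (Finset.mem_univ i), q,
        fun z hz => verts_nontrivial M w' q hw' z hz⟩
    · refine no_left_inf_path hfin a _ ?_
      intro x hx
      haveI : Nontrivial (M.obj (vtx x)) := hx
      obtain ⟨v, hv⟩ := exists_ne (0 : M.obj (vtx x))
      obtain ⟨i, q, w', hw'⟩ := gen_exists ε hε v hv
      exact ⟨i, ⟨q⟩⟩
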